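/- Suppose E is spectral and 𝔖(E) is sharply determining. Let A = {a₁,…,aₙ'} and B = {b₁,…,bₘ'} be contexts, let I₁,…,Iₙ be pairwise disjoint nonempty subsets of {1,…,n'} and J₁,…,Jₘ pairwise disjoint nonempty subsets of {1,…,m'}, set a'ᵢ = Σ_{j∈Iᵢ} aⱼ and b'ₖ = Σ_{l∈Jₖ} b_l, and suppose Σᵢ₌₁ⁿ μᵢ a'ᵢ = f = Σₖ₌₁ᵐ νₖ b'ₖ where μ₁ > ⋯ > μₙ > 0 and ν₁ > ⋯ > νₘ > 0. Then n = m, μᵢ = νᵢ for every i, and a'ᵢ = b'ᵢ for every i. -/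

import Mathlib

variable {V : Type*} [AddCommGroup V] [Module ℝ V]

/-- `P` is a pointed convex cone: closed under addition, nonnegative scalar
multiplication, and `P ∩ (-P) = {0}`. -/
def IsCone (P : Set V) : Prop :=
  (∀ x ∈ P, ∀ y ∈ P, x + y ∈ P) ∧
  (∀ c : ℝ, 0 ≤ c → ∀ x ∈ P, c • x ∈ P) ∧
  (∀ x ∈ P, -x ∈ P → x = 0)

/-- The order induced by the cone `P`: `v ≤ w` iff `w - v ∈ P`. -/
def leC (P : Set V) (v w : V) : Prop := w - v ∈ P

/-- The linear effect algebra `E = [0, u]`. -/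
def Eff (P : Set V) (u : V) : Set V := {v | leC P 0 v ∧ leC P v u}

/-- `f` is a sharp element of `[0, u]`. -/
def Sharp (P : Set V) (u f : V) : Prop :=
  f ∈ Eff P u ∧ ∀ g ∈ Eff P u, leC P g f → leC P g (u - f) → g = 0

/-- `f` is a one-dimensional element of `[0, u]`. -/
def OneDim (P : Set V) (u f : V) : Prop :=
  f ∈ Eff P u ∧ f ≠ 0 ∧ ∀ g ∈ Eff P u, leC P g f → ∃ t : ℝ, 0 ≤ t ∧ t ≤ 1 ∧ g = t • f

/-- The set of sharp one-dimensional elements of `[0, u]`. -/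
def S1 (P : Set V) (u : V) : Set V := {f | Sharp P u f ∧ OneDim P u f}

/-- A context: a finite family of sharp one-dimensional elements summing to `u`. -/
def IsContext (P : Set V) (u : V) {n : ℕ} (a : Fin n → V) : Prop :=
  (∀ i, a i ∈ S1 P u) ∧ ∑ i, a i = u

/-- The effect algebra `[0, u]` is spectral. -/
def Spectral (P : Set V) (u : V) : Prop :=
  ∀ f ∈ Eff P u, ∃ (n : ℕ) (a : Fin n → V) (μ : Fin n → ℝ),
    IsContext P u a ∧ (∀ i, 0 ≤ μ i ∧ μ i ≤ 1) ∧ f = ∑ i, μ i • a i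

/-- A state on `[0, u]`: a positive linear functional with `s u = 1`. -/
def IsState (P : Set V) (u : V) (s : V →ₗ[ℝ] ℝ) : Prop :=
  (∀ p ∈ P, 0 ≤ s p) ∧ s u = 1

/-- The state space is sharply determining: for every sharp `f` and every `g ∈ E`
with `¬(f ≤ g)` there is a state `s` with `s f = 1 > s g`. -/
def SharplyDet (P : Set V) (u : V) : Prop :=
  ∀ f ∈ Eff P u, Sharp P u f → ∀ g ∈ Eff P u, ¬ leC P f g →
    ∃ s : V →ₗ[ℝ] ℝ, IsState P u s ∧ s f = 1 ∧ s g < 1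

set_option linter.unusedSectionVars false

section Helpers

variable {P : Set V} {u : V}

lemma zero_mem_cone (hP : IsCone P) (hu : u ∈ P) : (0 : V) ∈ P := by
  have h := hP.2.1 0 le_rfl u hu
  simpa using h

lemma cone_sum_mem (hP : IsCone P) (hu : u ∈ P) {ι : Type*} {T : Finset ι} {f : ι → V}
    (h : ∀ i ∈ T, f i ∈ P) : ∑ i ∈ T, f i ∈ P :=
  Finset.sum_induction f (· ∈ P) (fun x y hx hy => hP.1 x hx y hy) (zero_mem_cone hP hu) h

lemma state_mono {s : V →ₗ[ℝ] ℝ} (hs : IsState P u s) {v w : V} (h : leC P v w) :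
    s v ≤ s w := by
  have h1 := hs.1 _ h
  rw [map_sub] at h1
  linarith

lemma eff_mem_cone {v : V} (hv : v ∈ Eff P u) : v ∈ P := by
  have h := hv.1
  simpa [leC] using h

variable {n' : ℕ} {a : Fin n' → V}

lemma ctx_mem_cone (ha : IsContext P u a) (j : Fin n') : a j ∈ P :=
  eff_mem_cone (ha.1 j).1.1

lemma ctx_sum_le_u (hP : IsCone P) (hu : u ∈ P) (ha : IsContext P u a)
    (T : Finset (Fin n')) : leC P (∑ j ∈ T, a j) u := by
  show u - _ ∈ P
  have h : u - ∑ j ∈ T, a j = ∑ j ∈ Tᶜ, a j := by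
    rw [← ha.2, ← Finset.sum_compl_add_sum T a]
    abel
  rw [h]
  exact cone_sum_mem hP hu fun j _ => ctx_mem_cone ha j

lemma ctx_sum_eff (hP : IsCone P) (hu : u ∈ P) (ha : IsContext P u a)
    (T : Finset (Fin n')) : (∑ j ∈ T, a j) ∈ Eff P u := by
  refine ⟨?_, ctx_sum_le_u hP hu ha T⟩
  show (∑ j ∈ T, a j) - 0 ∈ P
  rw [sub_zero]
  exact cone_sum_mem hP hu fun j _ => ctx_mem_cone ha j

lemma ctx_sum_mono (hP : IsCone P) (hu : u ∈ P) (ha : IsContext P u a)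
    {T T' : Finset (Fin n')} (h : T ⊆ T') :
    leC P (∑ j ∈ T, a j) (∑ j ∈ T', a j) := by
  show _ ∈ P
  rw [← Finset.sum_sdiff h, add_sub_cancel_right]
  exact cone_sum_mem hP hu fun j _ => ctx_mem_cone ha j

lemma state_ctx_zero (hP : IsCone P) (hu : u ∈ P) (ha : IsContext P u a)
    {s : V →ₗ[ℝ] ℝ} (hs : IsState P u s) {j0 j : Fin n'} (hjj : j ≠ j0)
    (h1 : s (a j0) = 1) : s (a j) = 0 := by
  have hle : leC P (a j0 + a j) u := by
    have h2 : a j0 + a j = ∑ i ∈ ({j0, j} : Finset (Fin n')), a i := by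
      rw [Finset.sum_pair (Ne.symm hjj)]
    rw [h2]
    exact ctx_sum_le_u hP hu ha _
  have h3 := state_mono hs hle
  rw [map_add, h1, hs.2] at h3
  have h4 := hs.1 _ (ctx_mem_cone ha j)
  linarith

lemma fam_sum_le_u (hP : IsCone P) (hu : u ∈ P) (ha : IsContext P u a)
    {n : ℕ} (I : Fin n → Finset (Fin n'))
    (hdisj : ∀ i j, i ≠ j → Disjoint (I i) (I j)) :
    leC P (∑ i, ∑ j ∈ I i, a j) u := by
  classical
  have h : ∑ i, ∑ j ∈ I i, a j = ∑ j ∈ Finset.univ.biUnion I, a j :=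
    (Finset.sum_biUnion (fun i _ j _ hij => hdisj i j hij)).symm
  rw [h]
  exact ctx_sum_le_u hP hu ha _

end Helpers

set_option linter.unusedSectionVars false

lemma real_le {n : ℕ} (μ x : Fin (n+1) → ℝ) (hx0 : ∀ i, 0 ≤ x i) (hx1 : ∑ i, x i ≤ 1)
    (hμpos : ∀ i, 0 < μ i) (hμdec : ∀ i j : Fin (n+1), i < j → μ j < μ i) :
    ∑ i, μ i * x i ≤ μ 0 := by
  have h1 : ∀ i, μ i ≤ μ 0 := fun i => by
    rcases eq_or_ne i 0 with h | h
    · simp [h]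
    · exact le_of_lt (hμdec 0 i (Fin.pos_of_ne_zero h))
  calc ∑ i, μ i * x i ≤ ∑ i, μ 0 * x i :=
        Finset.sum_le_sum fun i _ => mul_le_mul_of_nonneg_right (h1 i) (hx0 i)
    _ = μ 0 * ∑ i, x i := by rw [Finset.mul_sum]
    _ ≤ μ 0 * 1 := mul_le_mul_of_nonneg_left hx1 (le_of_lt (hμpos 0))
    _ = μ 0 := mul_one _

lemma real_eq {n : ℕ} (μ x : Fin (n+1) → ℝ) (hx0 : ∀ i, 0 ≤ x i) (hx1 : ∑ i, x i ≤ 1)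
    (hμpos : ∀ i, 0 < μ i) (hμdec : ∀ i j : Fin (n+1), i < j → μ j < μ i)
    (heq : ∑ i, μ i * x i = μ 0) : x 0 = 1 := by
  classical
  by_cases hz : ∀ i, i ≠ 0 → x i = 0
  · have h : ∑ i, μ i * x i = μ 0 * x 0 := by
      apply Finset.sum_eq_single
      · intro i _ hi; rw [hz i hi, mul_zero]
      · intro h0; exact absurd (Finset.mem_univ _) h0
    rw [h] at heq
    exact mul_left_cancel₀ (ne_of_gt (hμpos 0)) (by rw [heq, mul_one])
  · exfalso
    push_neg at hz
    obtain ⟨i1, hi1, hxi1⟩ := hz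
    have hsplit : ∑ i, μ i * x i
        = μ 0 * x 0 + ∑ i ∈ Finset.univ.erase 0, μ i * x i :=
      (Finset.add_sum_erase _ _ (Finset.mem_univ 0)).symm
    have hlt : ∑ i ∈ Finset.univ.erase 0, μ i * x i
        < ∑ i ∈ Finset.univ.erase 0, μ 0 * x i := by
      apply Finset.sum_lt_sum
      · intro i hi
        exact mul_le_mul_of_nonneg_right
          (le_of_lt (hμdec 0 i (Fin.pos_of_ne_zero (Finset.ne_of_mem_erase hi)))) (hx0 i)
      · refine ⟨i1, Finset.mem_erase.mpr ⟨hi1, Finset.mem_univ _⟩, ?_⟩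
        exact mul_lt_mul_of_pos_right (hμdec 0 i1 (Fin.pos_of_ne_zero hi1))
          (lt_of_le_of_ne (hx0 i1) (Ne.symm hxi1))
    have hsum2 : μ 0 * x 0 + ∑ i ∈ Finset.univ.erase 0, μ 0 * x i = μ 0 * ∑ i, x i := by
      rw [← Finset.mul_sum, ← mul_add, Finset.add_sum_erase _ _ (Finset.mem_univ 0)]
    have h3 : μ 0 * ∑ i, x i ≤ μ 0 * 1 :=
      mul_le_mul_of_nonneg_left hx1 (le_of_lt (hμpos 0))
    rw [heq] at hsplit
    rw [mul_one] at h3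
    linarith

lemma real_zero {n : ℕ} (x : Fin n → ℝ) (hx0 : ∀ i, 0 ≤ x i) (hx1 : ∑ i, x i ≤ 1)
    {i0 i : Fin n} (h : x i0 = 1) (hne : i ≠ i0) : x i = 0 := by
  classical
  have h1 : x i ≤ ∑ j ∈ Finset.univ.erase i0, x j :=
    Finset.single_le_sum (fun j _ => hx0 j)
      (Finset.mem_erase.mpr ⟨hne, Finset.mem_univ _⟩)
  have h2 := Finset.add_sum_erase Finset.univ x (Finset.mem_univ i0)
  have h3 := hx0 i
  linarith

section Main

set_option linter.unusedSectionVars false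

variable {P : Set V} {u : V}

lemma exists_state_one (hP : IsCone P) (hu : u ∈ P) (hsd : SharplyDet P u)
    {f : V} (hf : f ∈ S1 P u) :
    ∃ s : V →ₗ[ℝ] ℝ, IsState P u s ∧ s f = 1 := by
  have h0 : (0 : V) ∈ Eff P u := by
    constructor
    · show (0 : V) - 0 ∈ P
      simpa using zero_mem_cone hP hu
    · show u - 0 ∈ P
      simpa using hu
  have hne : ¬ leC P f 0 := by
    intro hc
    have hc' : -f ∈ P := by simpa [leC] using hc
    exact hf.2.2.1 (hP.2.2 f (eff_mem_cone hf.1.1) hc')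
  obtain ⟨s, hs, h1, -⟩ := hsd f hf.1.1 hf.1 0 h0 hne
  exact ⟨s, hs, h1⟩

variable {n' : ℕ} {a : Fin n' → V}

/-- eigenvalue evaluation: a state pinned at `a j0`, `j0 ∈ I i0`, evaluates
the combination to `μ i0`. -/
lemma state_eig (hP : IsCone P) (hu : u ∈ P) (ha : IsContext P u a)
    {n : ℕ} (I : Fin n → Finset (Fin n'))
    (hdisj : ∀ i j, i ≠ j → Disjoint (I i) (I j)) (μ : Fin n → ℝ)
    {s : V →ₗ[ℝ] ℝ} (hs : IsState P u s) {i0 : Fin n} {j0 : Fin n'}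
    (hj0 : j0 ∈ I i0) (h1 : s (a j0) = 1) :
    s (∑ i, μ i • ∑ j ∈ I i, a j) = μ i0 := by
  classical
  set x : Fin n → ℝ := fun i => s (∑ j ∈ I i, a j) with hxdef
  have hx0 : ∀ i, 0 ≤ x i := fun i =>
    hs.1 _ (cone_sum_mem hP hu fun j _ => ctx_mem_cone ha j)
  have hx1 : ∑ i, x i ≤ 1 := by
    have h2 := state_mono hs (fam_sum_le_u hP hu ha I hdisj)
    rw [map_sum, hs.2] at h2
    exact h2
  have hxi0 : x i0 = 1 := by
    have hle : x i0 ≤ 1 := by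
      have h2 := state_mono hs (ctx_sum_le_u hP hu ha (I i0))
      rw [hs.2] at h2
      exact h2
    have hge : 1 ≤ x i0 := by
      have hsub : leC P (a j0) (∑ j ∈ I i0, a j) := by
        have h3 : a j0 = ∑ j ∈ ({j0} : Finset (Fin n')), a j := by simp
        rw [h3]
        exact ctx_sum_mono hP hu ha (Finset.singleton_subset_iff.mpr hj0)
      have := state_mono hs hsub
      rw [h1] at this
      exact this
    linarith
  have hmap : s (∑ i, μ i • ∑ j ∈ I i, a j) = ∑ i, μ i * x i := by
    rw [map_sum]
    simp [hxdef, smul_eq_mul]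
  rw [hmap]
  have h4 : ∑ i, μ i * x i = μ i0 * x i0 := by
    apply Finset.sum_eq_single
    · intro i _ hi
      rw [real_zero x hx0 hx1 hxi0 hi, mul_zero]
    · intro h0; exact absurd (Finset.mem_univ _) h0
  rw [h4, hxi0, mul_one]

/-- If every state pinned at some `a j`, `j ∈ T`, gives `s g = 1`, then `∑_{j∈T} a j ≤ g`. -/
lemma key_le (hP : IsCone P) (hu : u ∈ P) (hsd : SharplyDet P u)
    (ha : IsContext P u a) {g : V} (hg : g ∈ Eff P u) (T : Finset (Fin n'))
    (h : ∀ s : V →ₗ[ℝ] ℝ, IsState P u s → ∀ j ∈ T, s (a j) = 1 → s g = 1) :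
    leC P (∑ j ∈ T, a j) g := by
  classical
  induction T using Finset.induction_on with
  | empty =>
      show g - ∑ j ∈ (∅ : Finset (Fin n')), a j ∈ P
      simpa using eff_mem_cone hg
  | @insert j0 T' hj0 ih =>
      have hT' : leC P (∑ j ∈ T', a j) g :=
        ih fun s hs j hj h1 => h s hs j (Finset.mem_insert_of_mem hj) h1
      set d := g - ∑ j ∈ T', a j with hd_def
      have hd : d ∈ Eff P u := by
        constructor
        · show d - 0 ∈ P
          simpa [hd_def, leC] using hT'
        · show u - d ∈ P
          have h2 : u - d = (u - g) + ∑ j ∈ T', a j := by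
            rw [hd_def]; abel
          rw [h2]
          exact hP.1 _ hg.2 _ (cone_sum_mem hP hu fun j _ => ctx_mem_cone ha j)
      have hle : leC P (a j0) d := by
        by_contra hc
        obtain ⟨s, hs, hs1, hslt⟩ := hsd (a j0) (ha.1 j0).1.1 (ha.1 j0).1 d hd hc
        have hg1 : s g = 1 := h s hs j0 (Finset.mem_insert_self _ _) hs1
        have hT0 : s (∑ j ∈ T', a j) = 0 := by
          rw [map_sum]
          exact Finset.sum_eq_zero fun j hj =>
            state_ctx_zero hP hu ha hs (fun hje => hj0 (by rw [← hje]; exact hj)) hs1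
        have hd1 : s d = 1 := by
          rw [hd_def, map_sub, hg1, hT0, sub_zero]
        linarith
      show g - ∑ j ∈ insert j0 T', a j ∈ P
      rw [Finset.sum_insert hj0]
      have h5 : g - (a j0 + ∑ j ∈ T', a j) = d - a j0 := by
        rw [hd_def]; abel
      rw [h5]
      exact hle

end Main

section MainAux

set_option linter.unusedSectionVars false

lemma main_aux {P : Set V} (hP : IsCone P) {u : V} (hu : u ∈ P) (hsd : SharplyDet P u)
    {n' m' : ℕ} {a : Fin n' → V} {b : Fin m' → V}
    (ha : IsContext P u a) (hb : IsContext P u b) :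
    ∀ n m : ℕ, ∀ (I : Fin n → Finset (Fin n')) (J : Fin m → Finset (Fin m')),
      (∀ i, (I i).Nonempty) → (∀ i j, i ≠ j → Disjoint (I i) (I j)) →
      (∀ k, (J k).Nonempty) → (∀ k l, k ≠ l → Disjoint (J k) (J l)) →
      ∀ (μ : Fin n → ℝ) (ν : Fin m → ℝ),
      (∀ i, 0 < μ i) → (∀ i j, i < j → μ j < μ i) →
      (∀ k, 0 < ν k) → (∀ k l, k < l → ν l < ν k) →
      ∑ i, μ i • ∑ j ∈ I i, a j = ∑ k, ν k • ∑ l ∈ J k, b l →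
      ∃ h : n = m, (∀ i, μ i = ν (Fin.cast h i)) ∧
        (∀ i, ∑ j ∈ I i, a j = ∑ l ∈ J (Fin.cast h i), b l) := by
  intro n
  induction n with
  | zero =>
      intro m I J hIne hIdisj hJne hJdisj μ ν hμp hμd hνp hνd heq
      cases m with
      | zero => exact ⟨rfl, fun i => i.elim0, fun i => i.elim0⟩
      | succ m'' =>
          exfalso
          obtain ⟨l0, hl0⟩ := hJne 0
          obtain ⟨s, hs, h1⟩ := exists_state_one hP hu hsd (hb.1 l0)
          have h2 : s (∑ k, ν k • ∑ l ∈ J k, b l) = ν 0 :=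
            state_eig hP hu hb J hJdisj ν hs hl0 h1
          rw [← heq] at h2
          simp at h2
          linarith [hνp 0]
  | succ n'' IH =>
      intro m I J hIne hIdisj hJne hJdisj μ ν hμp hμd hνp hνd heq
      obtain ⟨j0, hj0⟩ := hIne 0
      obtain ⟨s0, hs0, hs01⟩ := exists_state_one hP hu hsd (ha.1 j0)
      have hs0f : s0 (∑ i, μ i • ∑ j ∈ I i, a j) = μ 0 :=
        state_eig hP hu ha I hIdisj μ hs0 hj0 hs01
      cases m with
      | zero =>
          exfalso
          rw [heq] at hs0f
          simp at hs0f
          linarith [hμp 0]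
      | succ m'' =>
          obtain ⟨l0, hl0⟩ := hJne 0
          obtain ⟨t0, ht0, ht01⟩ := exists_state_one hP hu hsd (hb.1 l0)
          have ht0g : t0 (∑ k, ν k • ∑ l ∈ J k, b l) = ν 0 :=
            state_eig hP hu hb J hJdisj ν ht0 hl0 ht01
          -- state values of the other side are bounded by the top coefficient
          have hbound : ∀ (s : V →ₗ[ℝ] ℝ), IsState P u s →
              s (∑ k, ν k • ∑ l ∈ J k, b l) ≤ ν 0 := by
            intro s hs
            have hx0 : ∀ k, 0 ≤ s (∑ l ∈ J k, b l) := fun k =>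
              hs.1 _ (cone_sum_mem hP hu fun l _ => ctx_mem_cone hb l)
            have hx1 : ∑ k, s (∑ l ∈ J k, b l) ≤ 1 := by
              have h2 := state_mono hs (fam_sum_le_u hP hu hb J hJdisj)
              rw [map_sum, hs.2] at h2
              exact h2
            have hmap : s (∑ k, ν k • ∑ l ∈ J k, b l)
                = ∑ k, ν k * s (∑ l ∈ J k, b l) := by
              rw [map_sum]; simp [smul_eq_mul]
            rw [hmap]
            exact real_le ν _ hx0 hx1 hνp hνd
          have hbound' : ∀ (s : V →ₗ[ℝ] ℝ), IsState P u s →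
              s (∑ i, μ i • ∑ j ∈ I i, a j) ≤ μ 0 := by
            intro s hs
            have hx0 : ∀ i, 0 ≤ s (∑ j ∈ I i, a j) := fun i =>
              hs.1 _ (cone_sum_mem hP hu fun j _ => ctx_mem_cone ha j)
            have hx1 : ∑ i, s (∑ j ∈ I i, a j) ≤ 1 := by
              have h2 := state_mono hs (fam_sum_le_u hP hu ha I hIdisj)
              rw [map_sum, hs.2] at h2
              exact h2
            have hmap : s (∑ i, μ i • ∑ j ∈ I i, a j)
                = ∑ i, μ i * s (∑ j ∈ I i, a j) := by
              rw [map_sum]; simp [smul_eq_mul]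
            rw [hmap]
            exact real_le μ _ hx0 hx1 hμp hμd
          have hμν : μ 0 = ν 0 := by
            have h1 : μ 0 ≤ ν 0 := by
              have := hbound s0 hs0
              rw [← heq, hs0f] at this
              exact this
            have h2 : ν 0 ≤ μ 0 := by
              have := hbound' t0 ht0
              rw [heq, ht0g] at this
              exact this
            linarith
          -- extreme states pinned in I 0 evaluate B 0 to one
          have hpinB : ∀ (s : V →ₗ[ℝ] ℝ), IsState P u s → ∀ j ∈ I 0,
              s (a j) = 1 → s (∑ l ∈ J 0, b l) = 1 := by
            intro s hs j hj h1
            have h2 : s (∑ i, μ i • ∑ j' ∈ I i, a j') = μ 0 :=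
              state_eig hP hu ha I hIdisj μ hs hj h1
            rw [heq, hμν] at h2
            have hx0 : ∀ k, 0 ≤ s (∑ l ∈ J k, b l) := fun k =>
              hs.1 _ (cone_sum_mem hP hu fun l _ => ctx_mem_cone hb l)
            have hx1 : ∑ k, s (∑ l ∈ J k, b l) ≤ 1 := by
              have h3 := state_mono hs (fam_sum_le_u hP hu hb J hJdisj)
              rw [map_sum, hs.2] at h3
              exact h3
            have hmap : s (∑ k, ν k • ∑ l ∈ J k, b l)
                = ∑ k, ν k * s (∑ l ∈ J k, b l) := by
              rw [map_sum]; simp [smul_eq_mul]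
            rw [hmap] at h2
            exact real_eq ν _ hx0 hx1 hνp hνd h2
          have hpinA : ∀ (s : V →ₗ[ℝ] ℝ), IsState P u s → ∀ l ∈ J 0,
              s (b l) = 1 → s (∑ j ∈ I 0, a j) = 1 := by
            intro s hs l hl h1
            have h2 : s (∑ k, ν k • ∑ l' ∈ J k, b l') = ν 0 :=
              state_eig hP hu hb J hJdisj ν hs hl h1
            rw [← heq, ← hμν] at h2
            have hx0 : ∀ i, 0 ≤ s (∑ j ∈ I i, a j) := fun i =>
              hs.1 _ (cone_sum_mem hP hu fun j _ => ctx_mem_cone ha j)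
            have hx1 : ∑ i, s (∑ j ∈ I i, a j) ≤ 1 := by
              have h3 := state_mono hs (fam_sum_le_u hP hu ha I hIdisj)
              rw [map_sum, hs.2] at h3
              exact h3
            have hmap : s (∑ i, μ i • ∑ j ∈ I i, a j)
                = ∑ i, μ i * s (∑ j ∈ I i, a j) := by
              rw [map_sum]; simp [smul_eq_mul]
            rw [hmap] at h2
            exact real_eq μ _ hx0 hx1 hμp hμd h2
          have hAB : leC P (∑ j ∈ I 0, a j) (∑ l ∈ J 0, b l) :=
            key_le hP hu hsd ha (ctx_sum_eff hP hu hb (J 0)) (I 0) hpinB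
          have hBA : leC P (∑ l ∈ J 0, b l) (∑ j ∈ I 0, a j) :=
            key_le hP hu hsd hb (ctx_sum_eff hP hu ha (I 0)) (J 0) hpinA
          have hAB0 : ∑ j ∈ I 0, a j = ∑ l ∈ J 0, b l := by
            have h1 : (∑ l ∈ J 0, b l) - ∑ j ∈ I 0, a j ∈ P := hAB
            have h2 : -((∑ l ∈ J 0, b l) - ∑ j ∈ I 0, a j) ∈ P := by
              have := hBA
              simpa [leC, neg_sub] using this
            have h3 := hP.2.2 _ h1 h2
            have h4 := sub_eq_zero.mp h3
            exact h4.symm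
          have htail : ∑ i : Fin n'', μ i.succ • ∑ j ∈ I i.succ, a j
              = ∑ k : Fin m'', ν k.succ • ∑ l ∈ J k.succ, b l := by
            have h1 := heq
            rw [Fin.sum_univ_succ, Fin.sum_univ_succ, hμν, hAB0] at h1
            exact add_left_cancel h1
          obtain ⟨h'', hc1, hc2⟩ := IH m'' (fun i => I i.succ) (fun k => J k.succ)
            (fun i => hIne i.succ)
            (fun i j hij => hIdisj i.succ j.succ (fun h => hij (Fin.succ_injective _ h)))
            (fun k => hJne k.succ)
            (fun k l hkl => hJdisj k.succ l.succ (fun h => hkl (Fin.succ_injective _ h)))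
            (fun i => μ i.succ) (fun k => ν k.succ)
            (fun i => hμp i.succ)
            (fun i j hij => hμd i.succ j.succ (Fin.succ_lt_succ_iff.mpr hij))
            (fun k => hνp k.succ)
            (fun k l hkl => hνd k.succ l.succ (Fin.succ_lt_succ_iff.mpr hkl))
            htail
          have h : n'' + 1 = m'' + 1 := by rw [h'']
          refine ⟨h, fun i => ?_, fun i => ?_⟩
          · refine Fin.cases ?_ ?_ i
            · have hc : Fin.cast h (0 : Fin (n''+1)) = 0 := by
                apply Fin.ext; simp
              rw [hc]; exact hμν
            · intro i'
              have hc : Fin.cast h (Fin.succ i') = Fin.succ (Fin.cast h'' i') := by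
                apply Fin.ext; simp
              rw [hc]; exact hc1 i'
          · refine Fin.cases ?_ ?_ i
            · have hc : Fin.cast h (0 : Fin (n''+1)) = 0 := by
                apply Fin.ext; simp
              rw [hc]; exact hAB0
            · intro i'
              have hc : Fin.cast h (Fin.succ i') = Fin.succ (Fin.cast h'' i') := by
                apply Fin.ext; simp
              rw [hc]; exact hc2 i'

end MainAux

/-- Essential uniqueness of spectral decompositions in a spectral effect algebra
with sharply determining state space: if
`∑ᵢ μᵢ (∑_{j ∈ Iᵢ} aⱼ) = ∑ₖ νₖ (∑_{l ∈ Jₖ} b_l)` with strictly decreasing positive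
coefficients, then `n = m`, `μᵢ = νᵢ` and `∑_{j ∈ Iᵢ} aⱼ = ∑_{l ∈ Jᵢ} b_l`. -/
theorem stmt_16 (P : Set V) (hP : IsCone P) (u : V) (hu : u ∈ P)
    (hspec : Spectral P u) (hsd : SharplyDet P u)
    (n' m' n m : ℕ) (a : Fin n' → V) (b : Fin m' → V)
    (ha : IsContext P u a) (hb : IsContext P u b)
    (I : Fin n → Finset (Fin n')) (J : Fin m → Finset (Fin m'))
    (hIne : ∀ i, (I i).Nonempty)
    (hIdisj : ∀ i j, i ≠ j → Disjoint (I i) (I j))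
    (hJne : ∀ k, (J k).Nonempty)
    (hJdisj : ∀ k l, k ≠ l → Disjoint (J k) (J l))
    (μ : Fin n → ℝ) (ν : Fin m → ℝ)
    (hμpos : ∀ i, 0 < μ i) (hμdec : ∀ i j : Fin n, i < j → μ j < μ i)
    (hνpos : ∀ k, 0 < ν k) (hνdec : ∀ k l : Fin m, k < l → ν l < ν k)
    (heq : ∑ i, μ i • ∑ j ∈ I i, a j = ∑ k, ν k • ∑ l ∈ J k, b l) :
    ∃ h : n = m,
      (∀ i : Fin n, μ i = ν (Fin.cast h i)) ∧
      (∀ i : Fin n, ∑ j ∈ I i, a j = ∑ l ∈ J (Fin.cast h i), b l) := by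
  obtain ⟨h, h1, h2⟩ := main_aux hP hu hsd ha hb n m I J hIne hIdisj hJne hJdisj
    μ ν hμpos hμdec hνpos hνdec heq
  exact ⟨h, h1, h2⟩
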